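/- Floquet discriminant of the domain wall: Let Γ₀(x) = [[0, e^{−2ix}],[e^{2ix}, 0]] (the matrix of the domain wall m = (cos 2x, sin 2x, 0)). Let λ ∈ ℂ and let w ∈ ℂ satisfy w² = 1 + λ². If Y: ℝ → M₂(ℂ) solves Y'(x) = iλ Γ₀(x) Y(x) with Y(0) = I, then trace(Y(2π)) = 2 cos(2πw). -/

import Mathlib

open Matrix

noncomputable section

/-- The matrix of the domain wall `m = (cos 2x, sin 2x, 0)`:
`Γ₀(x) = [[0, e^{−2ix}],[e^{2ix}, 0]]`. -/
def Gamma0 (x : ℝ) : Matrix (Fin 2) (Fin 2) ℂ :=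
  !![0, Complex.exp (-(2 * Complex.I * (x : ℂ)));
     Complex.exp (2 * Complex.I * (x : ℂ)), 0]


private lemma hmulR (a : ℂ) (x : ℝ) : HasDerivAt (fun y : ℝ => a * (y:ℂ)) a x := by
  simpa using (Complex.ofRealCLM.hasDerivAt (x := x)).const_mul a

private def cc (w : ℂ) (x : ℝ) : ℂ := Complex.cos (w * x)
private def ss (w : ℂ) (x : ℝ) : ℂ := if w = 0 then (x:ℂ) else Complex.sin (w * x) / w

private lemma hasDerivAt_ss (w : ℂ) (x : ℝ) : HasDerivAt (ss w) (cc w x) x := by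
  unfold ss cc
  by_cases h : w = 0
  · simp only [h, if_pos rfl, zero_mul, Complex.cos_zero]
    exact Complex.ofRealCLM.hasDerivAt (x := x)
  · simp only [if_neg h]
    have h1 : HasDerivAt (fun y : ℝ => Complex.sin (w * y)) (Complex.cos (w * x) * w) x := by
      exact (Complex.hasDerivAt_sin (w * x)).comp x (hmulR w x)
    simpa [mul_div_assoc, mul_div_cancel_right₀ _ h] using h1.div_const w

private lemma hasDerivAt_cc (w : ℂ) (x : ℝ) : HasDerivAt (cc w) (-(w^2) * ss w x) x := by
  unfold ss cc
  by_cases h : w = 0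
  · simp only [h, zero_mul, if_pos rfl]
    simpa using (hasDerivAt_const x (Complex.cos 0))
  · simp only [if_neg h]
    have h1 : HasDerivAt (fun y : ℝ => Complex.cos (w * y)) (-Complex.sin (w * x) * w) x := by
      exact (Complex.hasDerivAt_cos (w * x)).comp x (hmulR w x)
    convert h1 using 1
    field_simp

private lemma pyth_cs (w : ℂ) (x : ℝ) : cc w x ^ 2 + w ^ 2 * ss w x ^ 2 = 1 := by
  unfold ss cc
  by_cases h : w = 0
  · simp [h]
  · rw [if_neg h]
    field_simp
    exact Complex.cos_sq_add_sin_sq _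

private lemma cc_zero (w : ℂ) : cc w 0 = 1 := by simp [cc]
private lemma ss_zero (w : ℂ) : ss w 0 = 0 := by simp [ss]

private lemma eq_of_hasDerivAt_zero {f : ℝ → ℂ} (h : ∀ x, HasDerivAt f (0:ℂ) x) (a b : ℝ) :
    f a = f b :=
  is_const_of_deriv_eq_zero (fun x => (h x).differentiableAt) (fun x => (h x).deriv) a b

/-- **Floquet discriminant of the domain wall.**
If `w² = 1 + λ²` and `Y` is the fundamental matrix solution of `Y' = iλΓ₀Y`, `Y(0) = I`,
then `trace Y(2π) = 2 cos(2πw)`. -/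
theorem domain_wall_floquet_discriminant
    (lam w : ℂ) (hw : w ^ 2 = 1 + lam ^ 2)
    (Y : ℝ → Matrix (Fin 2) (Fin 2) ℂ)
    (hY0 : Y 0 = 1)
    (hY_ode : ∀ x i j, HasDerivAt (fun y => Y y i j)
      (((Complex.I * lam) • (Gamma0 x * Y x)) i j) x) :
    Matrix.trace (Y (2 * Real.pi)) = 2 * Complex.cos (((2 * Real.pi : ℝ) : ℂ) * w) := by
  have hYd0 : ∀ (x : ℝ) (j : Fin 2), HasDerivAt (fun y => Y y 0 j)
      (Complex.I * lam * (Complex.exp (-(2 * Complex.I * (x:ℂ))) * Y x 1 j)) x := by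
    intro x j
    have h := hY_ode x 0 j
    convert h using 1
    simp [Gamma0, Matrix.mul_apply, Fin.sum_univ_two, Matrix.vecMul, dotProduct, Matrix.vecHead, Matrix.vecTail,
      mul_assoc]
  have hYd1 : ∀ (x : ℝ) (j : Fin 2), HasDerivAt (fun y => Y y 1 j)
      (Complex.I * lam * (Complex.exp (2 * Complex.I * (x:ℂ)) * Y x 0 j)) x := by
    intro x j
    have h := hY_ode x 1 j
    convert h using 1
    simp [Gamma0, Matrix.mul_apply, Fin.sum_univ_two, Matrix.vecMul, dotProduct, Matrix.vecHead, Matrix.vecTail,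
      mul_assoc]
  -- exp helpers
  have hE1 : ∀ x : ℝ, HasDerivAt (fun y : ℝ => Complex.exp (Complex.I * y))
      (Complex.exp (Complex.I * x) * Complex.I) x := fun x => (hmulR Complex.I x).cexp
  have hE2 : ∀ x : ℝ, HasDerivAt (fun y : ℝ => Complex.exp (-(Complex.I * y)))
      (Complex.exp (-(Complex.I * x)) * (-Complex.I)) x := fun x => ((hmulR Complex.I x).neg).cexp
  have hexpne : ∀ x : ℝ, Complex.exp (Complex.I * x) ≠ 0 := fun x => Complex.exp_ne_zero _
  have e1 : ∀ x : ℝ, Complex.exp (-(Complex.I * (x:ℂ))) = (Complex.exp (Complex.I * x))⁻¹ :=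
    fun x => Complex.exp_neg _
  have e2 : ∀ x : ℝ, Complex.exp (2 * Complex.I * (x:ℂ)) = (Complex.exp (Complex.I * x))^2 := by
    intro x
    rw [show (2 * Complex.I * (x:ℂ)) = Complex.I * x + Complex.I * x by ring, Complex.exp_add, sq]
  have e3 : ∀ x : ℝ, Complex.exp (-(2 * Complex.I * (x:ℂ))) = ((Complex.exp (Complex.I * x))^2)⁻¹ := by
    intro x; rw [Complex.exp_neg, e2]
  -- row 0 of W = N * Y is constant
  have key0 : ∀ (j : Fin 2) (x : ℝ), HasDerivAt
      (fun y : ℝ => (cc w y - Complex.I * ss w y) * Complex.exp (Complex.I * y) * Y y 0 j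
        + (-(Complex.I * lam) * ss w y) * Complex.exp (-(Complex.I * y)) * Y y 1 j) 0 x := by
    intro j x
    have hN00 := ((hasDerivAt_cc w x).sub ((hasDerivAt_ss w x).const_mul Complex.I)).mul (hE1 x)
    have hN01 := ((hasDerivAt_ss w x).const_mul (-(Complex.I * lam))).mul (hE2 x)
    have h := (hN00.mul (hYd0 x j)).add (hN01.mul (hYd1 x j))
    convert h using 1
    · rfl
    · rfl
    simp only [Pi.mul_apply, Pi.sub_apply, Pi.add_apply]
    rw [e1, e2, e3]
    field_simp
    linear_combination ((Complex.exp (Complex.I * x))^2 * ss w x * Y x 0 j) * hw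
      + ((Complex.exp (Complex.I * x))^2 * ss w x * Y x 0 j * (1 + lam^2)) * Complex.I_sq
  -- row 1 of W = N * Y is constant
  have key1 : ∀ (j : Fin 2) (x : ℝ), HasDerivAt
      (fun y : ℝ => (-(Complex.I * lam) * ss w y) * Complex.exp (Complex.I * y) * Y y 0 j
        + (cc w y + Complex.I * ss w y) * Complex.exp (-(Complex.I * y)) * Y y 1 j) 0 x := by
    intro j x
    have hN10 := ((hasDerivAt_ss w x).const_mul (-(Complex.I * lam))).mul (hE1 x)
    have hN11 := ((hasDerivAt_cc w x).add ((hasDerivAt_ss w x).const_mul Complex.I)).mul (hE2 x)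
    have h := (hN10.mul (hYd0 x j)).add (hN11.mul (hYd1 x j))
    convert h using 1
    · rfl
    · rfl
    simp only [Pi.mul_apply, Pi.sub_apply, Pi.add_apply]
    rw [e1, e2, e3]
    field_simp
    linear_combination ((1 + lam^2) * 1 * ss w x * Y x 1 j) * Complex.I_sq
      + (1 * ss w x * Y x 1 j) * hw
  -- endpoint values
  have hET : Complex.exp (Complex.I * ((2 * Real.pi : ℝ) : ℂ)) = 1 := by
    rw [show Complex.I * ((2 * Real.pi : ℝ) : ℂ) = 2 * (Real.pi : ℂ) * Complex.I by
      push_cast; ring]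
    exact Complex.exp_two_pi_mul_I
  have hET' : Complex.exp (-(Complex.I * ((2 * Real.pi : ℝ) : ℂ))) = 1 := by
    rw [Complex.exp_neg, hET, inv_one]
  have E00 := eq_of_hasDerivAt_zero (key0 0) 0 (2 * Real.pi)
  have E01 := eq_of_hasDerivAt_zero (key0 1) 0 (2 * Real.pi)
  have E10 := eq_of_hasDerivAt_zero (key1 0) 0 (2 * Real.pi)
  have E11 := eq_of_hasDerivAt_zero (key1 1) 0 (2 * Real.pi)
  simp only [Complex.ofReal_zero, mul_zero, neg_zero, Complex.exp_zero, cc_zero, ss_zero,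
    hY0, Matrix.one_apply, hET, hET', mul_one, mul_zero, zero_mul, one_mul, add_zero,
    zero_add, sub_zero] at E00 E01 E10 E11
  norm_num at E00 E01 E10 E11
  simp only [Matrix.trace, Fin.sum_univ_two, Matrix.diag]
  have hcos : Complex.cos (((2 * Real.pi : ℝ) : ℂ) * w) = cc w (2 * Real.pi) := by
    rw [cc, mul_comm]
  rw [hcos]
  have P := pyth_cs w (2 * Real.pi)
  set C := cc w (2 * Real.pi) with hC
  set S := ss w (2 * Real.pi) with hS
  set a := Y (2 * Real.pi) 0 0 with ha
  set b := Y (2 * Real.pi) 0 1 with hb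
  set d := Y (2 * Real.pi) 1 0 with hd
  set e := Y (2 * Real.pi) 1 1 with he
  linear_combination (-(C + Complex.I*S)) * E00 + (-(Complex.I*lam*S)) * E10
    + (-(C - Complex.I*S)) * E11 + (-(Complex.I*lam*S)) * E01
    - (a + e) * P + ((a + e)*(1+lam^2)*S^2) * Complex.I_sq + ((a + e)*S^2) * hw
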